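/- arXiv:1009.5335 — 2 statements merged into one kernel-verified Lean document; each statement's English description precedes it below -/
import Mathlib

section
/- Let f : [0,1] → ℝ be in L², N > 1 a natural number, and let a_1,…,a_N > 0 with ∑ a_k = 1, with α_0 = 0 and α_k = α_{k-1} + a_k. Define G(f) = ∑_{k=1}^N (β_k·χ_{(α_{k-1},α_k)} + d_k·G_k(f)) where [G_k(f)](x) = f((x-α_{k-1})/a_k) for x ∈ (α_{k-1},α_k) and 0 otherwise. Then G is a contraction mapping on L²[0,1] if and only if ∑_{k=1}^N a_k·|d_k|² < 1. -/
open MeasureTheory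
open scoped ENNReal NNReal

/-- The endpoints `α_k = a_1 + ⋯ + a_k` (indices shifted to start at 0). -/
noncomputable def alphaPt (a : ℕ → ℝ) (k : ℕ) : ℝ := ∑ j ∈ Finset.range k, a j

/-- The similarity operator `G` associated with the data `a, β, d`:
`G(f) = ∑_{k=1}^N (β_k · χ_{(α_{k-1},α_k)} + d_k · G_k(f))`, realized pointwise. -/
noncomputable def similarityOp (N : ℕ) (a β d : ℕ → ℝ) (f : ℝ → ℝ) (x : ℝ) : ℝ :=
  ∑ k ∈ Finset.range N,
    Set.indicator (Set.Ioo (alphaPt a k) (alphaPt a (k + 1)))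
      (fun t => β k + d k * f ((t - alphaPt a k) / a k)) x

/-- Change of variables for the lower integral under the affine map `t ↦ (t - c)/aj`. -/
lemma sub_lintegral (G : ℝ → ℝ≥0∞) (c aj : ℝ) (haj : 0 < aj) :
    ∫⁻ x, (Set.Ioo c (c + aj)).indicator (fun t => G ((t - c) / aj)) x =
      ENNReal.ofReal aj * ∫⁻ y, (Set.Ioo (0:ℝ) 1).indicator G y := by
  set e : ℝ ≃ᵐ ℝ :=
    ((Homeomorph.mulLeft₀ aj haj.ne').trans (Homeomorph.addLeft c)).toMeasurableEquiv with he
  have hce : ⇑e = (fun x => c + x) ∘ (fun x => aj * x) := rfl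
  have hmap : Measure.map (⇑e) volume = ENNReal.ofReal |aj⁻¹| • volume := by
    rw [hce, ← Measure.map_map (measurable_const_add c) (measurable_const_mul aj),
      Real.map_volume_mul_left haj.ne', Measure.map_smul,
      map_add_left_eq_self volume c]
  have hcomp : ∀ y, (Set.Ioo c (c + aj)).indicator (fun t => G ((t - c) / aj)) (e y) =
      (Set.Ioo (0:ℝ) 1).indicator G y := by
    intro y
    have hey : e y = c + aj * y := rfl
    have hmem : e y ∈ Set.Ioo c (c + aj) ↔ y ∈ Set.Ioo (0:ℝ) 1 := by
      rw [hey]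
      simp only [Set.mem_Ioo]
      constructor
      · rintro ⟨h1, h2⟩
        constructor <;> nlinarith
      · rintro ⟨h1, h2⟩
        constructor <;> nlinarith
    by_cases hy : y ∈ Set.Ioo (0:ℝ) 1
    · rw [Set.indicator_of_mem (hmem.2 hy), Set.indicator_of_mem hy, hey]
      congr 1
      field_simp
      ring
    · rw [Set.indicator_of_notMem (fun h => hy (hmem.1 h)),
        Set.indicator_of_notMem hy]
  calc ∫⁻ x, (Set.Ioo c (c + aj)).indicator (fun t => G ((t - c) / aj)) x
      = (ENNReal.ofReal aj * ENNReal.ofReal |aj⁻¹|) *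
        ∫⁻ x, (Set.Ioo c (c + aj)).indicator (fun t => G ((t - c) / aj)) x := by
        rw [← ENNReal.ofReal_mul haj.le, abs_of_pos (inv_pos.2 haj),
          mul_inv_cancel₀ haj.ne', ENNReal.ofReal_one, one_mul]
    _ = ENNReal.ofReal aj *
        ∫⁻ x, (Set.Ioo c (c + aj)).indicator (fun t => G ((t - c) / aj)) x
          ∂(ENNReal.ofReal |aj⁻¹| • volume) := by
        rw [lintegral_smul_measure, smul_eq_mul, mul_assoc]
    _ = ENNReal.ofReal aj *
        ∫⁻ x, (Set.Ioo c (c + aj)).indicator (fun t => G ((t - c) / aj)) x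
          ∂(Measure.map (⇑e) volume) := by rw [hmap]
    _ = ENNReal.ofReal aj *
        ∫⁻ y, (Set.Ioo c (c + aj)).indicator (fun t => G ((t - c) / aj)) (e y) := by
        rw [lintegral_map_equiv]
    _ = ENNReal.ofReal aj * ∫⁻ y, (Set.Ioo (0:ℝ) 1).indicator G y := by
        congr 1; exact lintegral_congr hcomp

/-- The main computation: the square integral of `∑ d_k G_k(h)` equals
`(∑ a_k d_k²)` times that of `h`. -/
lemma key_lintegral (N : ℕ) (a d : ℕ → ℝ) (ha : ∀ k < N, 0 < a k)
    (hsum : ∑ k ∈ Finset.range N, a k = 1) (h : ℝ → ℝ) (hm : Measurable h) :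
    ∫⁻ x in Set.Icc (0:ℝ) 1,
      (‖∑ k ∈ Finset.range N, (Set.Ioo (alphaPt a k) (alphaPt a (k+1))).indicator
        (fun t => d k * h ((t - alphaPt a k) / a k)) x‖₊ : ℝ≥0∞) ^ (2:ℝ)
    = ENNReal.ofReal (∑ k ∈ Finset.range N, a k * d k ^ 2) *
        ∫⁻ x in Set.Icc (0:ℝ) 1, (‖h x‖₊ : ℝ≥0∞) ^ (2:ℝ) := by
  have hmono : ∀ i j, i ≤ j → j ≤ N → alphaPt a i ≤ alphaPt a j := by
    intro i j hij hjN
    exact Finset.sum_le_sum_of_subset_of_nonneg (Finset.range_subset_range.2 hij)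
      (fun m hm _ => (ha m (lt_of_lt_of_le (Finset.mem_range.1 hm) hjN)).le)
  have hα0 : alphaPt a 0 = 0 := by simp [alphaPt]
  have hαN : alphaPt a N = 1 := hsum
  -- uniqueness of the interval containing x
  have huniq : ∀ x, ∀ j < N, x ∈ Set.Ioo (alphaPt a j) (alphaPt a (j+1)) →
      ∀ k < N, k ≠ j → x ∉ Set.Ioo (alphaPt a k) (alphaPt a (k+1)) := by
    intro x j hjN hxj k hkN hkj hxk
    rcases lt_or_gt_of_ne hkj with hlt | hgt
    · have : alphaPt a (k+1) ≤ alphaPt a j := hmono _ _ hlt hjN.le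
      exact absurd (lt_of_lt_of_le hxk.2 this) (not_lt.2 hxj.1.le)
    · have : alphaPt a (j+1) ≤ alphaPt a k := hmono _ _ hgt hkN.le
      exact absurd (lt_of_lt_of_le hxj.2 this) (not_lt.2 hxk.1.le)
  -- norm-square of constant coefficient
  have hnc : ∀ (k : ℕ) (y : ℝ), ((‖d k * y‖₊ : ℝ≥0∞)) ^ (2:ℝ)
      = ENNReal.ofReal (d k ^ 2) * (‖y‖₊ : ℝ≥0∞) ^ (2:ℝ) := by
    intro k y
    have h1 : ((‖d k * y‖₊ : ℝ≥0∞)) = (‖d k‖₊ : ℝ≥0∞) * (‖y‖₊ : ℝ≥0∞) := by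
      rw [← ENNReal.coe_mul, nnnorm_mul]
    rw [h1, ENNReal.mul_rpow_of_nonneg _ _ (by norm_num : (0:ℝ) ≤ 2)]
    congr 1
    rw [← enorm_eq_nnnorm, ← ofReal_norm_eq_enorm, ENNReal.ofReal_rpow_of_nonneg (norm_nonneg _) (by norm_num)]
    congr 1
    rw [Real.norm_eq_abs, show (2:ℝ) = ((2:ℕ):ℝ) by norm_num, Real.rpow_natCast, sq_abs]
  -- pointwise identity
  have hpt : ∀ x, (‖∑ k ∈ Finset.range N, (Set.Ioo (alphaPt a k) (alphaPt a (k+1))).indicator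
        (fun t => d k * h ((t - alphaPt a k) / a k)) x‖₊ : ℝ≥0∞) ^ (2:ℝ)
      = ∑ k ∈ Finset.range N, (Set.Ioo (alphaPt a k) (alphaPt a (k+1))).indicator
        (fun t => ENNReal.ofReal (d k ^ 2) * (‖h ((t - alphaPt a k) / a k)‖₊ : ℝ≥0∞) ^ (2:ℝ)) x := by
    intro x
    by_cases hx : ∃ j ∈ Finset.range N, x ∈ Set.Ioo (alphaPt a j) (alphaPt a (j+1))
    · obtain ⟨j, hjN', hxj⟩ := hx
      have hjN := Finset.mem_range.1 hjN'
      rw [Finset.sum_eq_single_of_mem j hjN'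
          (fun k hk hkj => Set.indicator_of_notMem
            (huniq x j hjN hxj k (Finset.mem_range.1 hk) hkj) _),
        Finset.sum_eq_single_of_mem j hjN'
          (fun k hk hkj => Set.indicator_of_notMem
            (huniq x j hjN hxj k (Finset.mem_range.1 hk) hkj) _),
        Set.indicator_of_mem hxj, Set.indicator_of_mem hxj]
      exact hnc j _
    · push_neg at hx
      rw [Finset.sum_eq_zero (fun k hk => Set.indicator_of_notMem
          (hx k hk) _),
        Finset.sum_eq_zero (fun k hk => Set.indicator_of_notMem (hx k hk) _)]
      simp [ENNReal.zero_rpow_of_pos (by norm_num : (0:ℝ) < 2)]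
  rw [lintegral_congr hpt]
  -- measurability of each summand
  have hmeas : ∀ k ∈ Finset.range N, Measurable fun x =>
      (Set.Ioo (alphaPt a k) (alphaPt a (k+1))).indicator
        (fun t => ENNReal.ofReal (d k ^ 2) * (‖h ((t - alphaPt a k) / a k)‖₊ : ℝ≥0∞) ^ (2:ℝ)) x := by
    intro k _
    apply Measurable.indicator _ measurableSet_Ioo
    apply Measurable.const_mul
    exact ((hm.comp ((measurable_id.sub_const _).div_const _)).nnnorm.coe_nnreal_ennreal).pow_const _
  rw [lintegral_finset_sum _ hmeas]
  have hterm : ∀ k ∈ Finset.range N,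
      (∫⁻ x in Set.Icc (0:ℝ) 1, (Set.Ioo (alphaPt a k) (alphaPt a (k+1))).indicator
        (fun t => ENNReal.ofReal (d k ^ 2) * (‖h ((t - alphaPt a k) / a k)‖₊ : ℝ≥0∞) ^ (2:ℝ)) x)
      = ENNReal.ofReal (a k * d k ^ 2) * ∫⁻ x in Set.Icc (0:ℝ) 1, (‖h x‖₊ : ℝ≥0∞) ^ (2:ℝ) := by
    intro k hk'
    have hk := Finset.mem_range.1 hk'
    have hsub : Set.Ioo (alphaPt a k) (alphaPt a (k+1)) ⊆ Set.Icc (0:ℝ) 1 := by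
      intro x hx
      exact ⟨le_trans (hα0 ▸ hmono 0 k (Nat.zero_le _) hk.le) hx.1.le,
        le_trans hx.2.le (hαN ▸ hmono (k+1) N hk le_rfl)⟩
    rw [← lintegral_indicator measurableSet_Icc _, Set.indicator_indicator,
      Set.inter_eq_self_of_subset_right hsub]
    have hsucc : alphaPt a (k+1) = alphaPt a k + a k := Finset.sum_range_succ a k
    rw [hsucc]
    calc ∫⁻ x, (Set.Ioo (alphaPt a k) (alphaPt a k + a k)).indicator
          (fun t => ENNReal.ofReal (d k ^ 2) * (‖h ((t - alphaPt a k) / a k)‖₊ : ℝ≥0∞) ^ (2:ℝ)) x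
        = ENNReal.ofReal (a k) * ∫⁻ y, (Set.Ioo (0:ℝ) 1).indicator
            (fun y => ENNReal.ofReal (d k ^ 2) * (‖h y‖₊ : ℝ≥0∞) ^ (2:ℝ)) y :=
          sub_lintegral (fun y => ENNReal.ofReal (d k ^ 2) * (‖h y‖₊ : ℝ≥0∞) ^ (2:ℝ))
            (alphaPt a k) (a k) (ha k hk)
      _ = ENNReal.ofReal (a k) * (ENNReal.ofReal (d k ^ 2) *
            ∫⁻ y in Set.Ioo (0:ℝ) 1, (‖h y‖₊ : ℝ≥0∞) ^ (2:ℝ)) := by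
          rw [lintegral_indicator measurableSet_Ioo _,
            lintegral_const_mul' _ _ ENNReal.ofReal_ne_top]
      _ = ENNReal.ofReal (a k * d k ^ 2) * ∫⁻ x in Set.Icc (0:ℝ) 1, (‖h x‖₊ : ℝ≥0∞) ^ (2:ℝ) := by
          rw [restrict_Ioo_eq_restrict_Icc, ← mul_assoc,
            ← ENNReal.ofReal_mul (ha k hk).le]
  rw [Finset.sum_congr rfl hterm, ← Finset.sum_mul, ← ENNReal.ofReal_sum_of_nonneg]
  intro k hk
  exact mul_nonneg (ha k (Finset.mem_range.1 hk)).le (sq_nonneg _)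

/-- `‖∑ d_k G_k(h)‖₂ = √(∑ a_k d_k²) · ‖h‖₂` on `L²[0,1]`. -/
lemma key_eLpNorm (N : ℕ) (a d : ℕ → ℝ) (ha : ∀ k < N, 0 < a k)
    (hsum : ∑ k ∈ Finset.range N, a k = 1) (h : ℝ → ℝ) (hm : Measurable h) :
    eLpNorm (fun x => ∑ k ∈ Finset.range N,
        (Set.Ioo (alphaPt a k) (alphaPt a (k+1))).indicator
          (fun t => d k * h ((t - alphaPt a k) / a k)) x) 2
        (volume.restrict (Set.Icc (0:ℝ) 1))
    = ENNReal.ofReal (Real.sqrt (∑ k ∈ Finset.range N, a k * d k ^ 2)) *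
        eLpNorm h 2 (volume.restrict (Set.Icc (0:ℝ) 1)) := by
  have hS0 : 0 ≤ ∑ k ∈ Finset.range N, a k * d k ^ 2 :=
    Finset.sum_nonneg fun k hk => mul_nonneg (ha k (Finset.mem_range.1 hk)).le (sq_nonneg _)
  rw [eLpNorm_eq_lintegral_rpow_enorm_toReal two_ne_zero ENNReal.ofNat_ne_top,
    eLpNorm_eq_lintegral_rpow_enorm_toReal two_ne_zero ENNReal.ofNat_ne_top]
  simp only [ENNReal.toReal_ofNat, enorm_eq_nnnorm]
  rw [key_lintegral N a d ha hsum h hm,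
    ENNReal.mul_rpow_of_nonneg _ _ (by norm_num : (0:ℝ) ≤ 1/2)]
  congr 1
  rw [ENNReal.ofReal_rpow_of_nonneg hS0 (by norm_num), Real.sqrt_eq_rpow]

/-- the similarity operator `G` is a contraction on `L²[0,1]`
if and only if `∑ a_k d_k² < 1`. -/
theorem similarityOp_contraction_iff (N : ℕ) (hN : 1 < N) (a β d : ℕ → ℝ)
    (ha : ∀ k < N, 0 < a k) (hsum : ∑ k ∈ Finset.range N, a k = 1) :
    (∃ c : ℝ, 0 ≤ c ∧ c < 1 ∧ ∀ f g : ℝ → ℝ, Measurable f → Measurable g →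
        MemLp f 2 (volume.restrict (Set.Icc (0:ℝ) 1)) →
        MemLp g 2 (volume.restrict (Set.Icc (0:ℝ) 1)) →
        eLpNorm (fun x => similarityOp N a β d f x - similarityOp N a β d g x) 2
            (volume.restrict (Set.Icc (0:ℝ) 1)) ≤
          ENNReal.ofReal c *
            eLpNorm (fun x => f x - g x) 2 (volume.restrict (Set.Icc (0:ℝ) 1))) ↔
      ∑ k ∈ Finset.range N, a k * (d k) ^ 2 < 1 := by
  have hS0 : 0 ≤ ∑ k ∈ Finset.range N, a k * d k ^ 2 :=
    Finset.sum_nonneg fun k hk => mul_nonneg (ha k (Finset.mem_range.1 hk)).le (sq_nonneg _)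
  have hdiff : ∀ (f g : ℝ → ℝ) (x : ℝ),
      similarityOp N a β d f x - similarityOp N a β d g x
        = ∑ k ∈ Finset.range N, (Set.Ioo (alphaPt a k) (alphaPt a (k+1))).indicator
            (fun t => d k * (f ((t - alphaPt a k) / a k) - g ((t - alphaPt a k) / a k))) x := by
    intro f g x
    rw [similarityOp, similarityOp, ← Finset.sum_sub_distrib]
    refine Finset.sum_congr rfl fun k _ => ?_
    by_cases hx : x ∈ Set.Ioo (alphaPt a k) (alphaPt a (k+1))
    · simp only [Set.indicator_of_mem hx]; ring
    · simp [Set.indicator_of_notMem hx]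
  have hkey : ∀ f g : ℝ → ℝ, Measurable f → Measurable g →
      eLpNorm (fun x => similarityOp N a β d f x - similarityOp N a β d g x) 2
          (volume.restrict (Set.Icc (0:ℝ) 1))
        = ENNReal.ofReal (Real.sqrt (∑ k ∈ Finset.range N, a k * d k ^ 2)) *
            eLpNorm (fun x => f x - g x) 2 (volume.restrict (Set.Icc (0:ℝ) 1)) := by
    intro f g hf hg
    rw [show (fun x => similarityOp N a β d f x - similarityOp N a β d g x)
        = fun x => ∑ k ∈ Finset.range N,
            (Set.Ioo (alphaPt a k) (alphaPt a (k+1))).indicator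
              (fun t => d k * ((fun y => f y - g y) ((t - alphaPt a k) / a k))) x
      from funext (hdiff f g)]
    exact key_eLpNorm N a d ha hsum (fun y => f y - g y) (hf.sub hg)
  have hμ : (volume.restrict (Set.Icc (0:ℝ) 1)) ≠ 0 := by
    intro h0
    have h1 : (volume.restrict (Set.Icc (0:ℝ) 1)) Set.univ = 1 := by
      rw [Measure.restrict_apply_univ, Real.volume_Icc]
      norm_num
    rw [h0] at h1
    simp at h1
  have hone : eLpNorm (fun _ : ℝ => (1:ℝ)) 2 (volume.restrict (Set.Icc (0:ℝ) 1)) = 1 := by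
    rw [eLpNorm_const _ two_ne_zero hμ]
    simp [Real.volume_Icc, Measure.restrict_apply_univ]
  constructor
  · rintro ⟨c, hc0, hc1, hC⟩
    have h1 := hC (fun _ => 1) (fun _ => 0) measurable_const measurable_const
      (memLp_const 1) (memLp_const 0)
    rw [hkey _ _ measurable_const measurable_const] at h1
    have heq : (fun x : ℝ => (fun _ : ℝ => (1:ℝ)) x - (fun _ : ℝ => (0:ℝ)) x)
        = fun _ : ℝ => (1:ℝ) := by funext x; simp
    rw [heq, hone, mul_one, mul_one] at h1
    have hle : Real.sqrt (∑ k ∈ Finset.range N, a k * d k ^ 2) ≤ c :=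
      (ENNReal.ofReal_le_ofReal_iff hc0).1 h1
    nlinarith [Real.sq_sqrt hS0, Real.sqrt_nonneg (∑ k ∈ Finset.range N, a k * d k ^ 2)]
  · intro hS
    refine ⟨Real.sqrt (∑ k ∈ Finset.range N, a k * d k ^ 2), Real.sqrt_nonneg _, ?_, ?_⟩
    · calc Real.sqrt (∑ k ∈ Finset.range N, a k * d k ^ 2) < Real.sqrt 1 :=
            Real.sqrt_lt_sqrt hS0 hS
        _ = 1 := Real.sqrt_one
    · intro f g hf hg _ _
      exact le_of_eq (hkey f g hf hg)
end

section
/- Let 𝔈 be a finite-dimensional inner product space, D : 𝔈 → 𝔈 a nonnegative self-adjoint operator, and F : 𝔈 → 𝔈 a self-adjoint operator. Let r = rank F, and let {μ_k}_{k=1}^r and {λ_k}_{k=1}^r be the eigenvalues (counted with multiplicity) of the pencils 1 - λF and (1+D) - λF respectively, i.e., the values λ for which 1 - λF (resp. 1 + D - λF) is singular, counted appropriately. Then ∏_{k=1}^r (λ_k/μ_k) ≤ det(1 + D). -/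
open Polynomial Matrix Filter

variable {n : ℕ}

lemma det_conj_eig {G : Matrix (Fin n) (Fin n) ℝ} (hG : G.IsHermitian)
    (M : Matrix (Fin n) (Fin n) ℝ) (x : ℝ) :
    Matrix.det (M - x • G)
      = Matrix.det ((star (hG.eigenvectorUnitary : Matrix (Fin n) (Fin n) ℝ)) * M
          * (hG.eigenvectorUnitary : Matrix (Fin n) (Fin n) ℝ)
          - x • Matrix.diagonal hG.eigenvalues) := by
  set U := (hG.eigenvectorUnitary : Matrix (Fin n) (Fin n) ℝ) with hU
  have h1 : star U * U = 1 := Unitary.coe_star_mul_self hG.eigenvectorUnitary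
  have h2 : U * star U = 1 := Unitary.coe_mul_star_self hG.eigenvectorUnitary
  have key : M - x • G = U * ((star U) * M * U - x • Matrix.diagonal hG.eigenvalues) * star U := by
    have hGst : G = U * Matrix.diagonal hG.eigenvalues * star U := by
      simpa using hG.spectral_theorem
    rw [Matrix.mul_sub, Matrix.sub_mul]
    rw [Matrix.mul_smul, Matrix.smul_mul]
    rw [← Matrix.mul_assoc, ← Matrix.mul_assoc, h2, Matrix.one_mul, Matrix.mul_assoc, h2,
      Matrix.mul_one]
    rw [← hGst]
  rw [key, Matrix.det_mul, Matrix.det_mul]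
  have : U.det * (star U).det = 1 := by rw [← Matrix.det_mul, h2, Matrix.det_one]
  linear_combination (star U * M * U - x • Matrix.diagonal hG.eigenvalues).det * this

lemma one_sub_smul_diagonal (v : Fin n → ℝ) (x : ℝ) :
    (1 : Matrix (Fin n) (Fin n) ℝ) - x • Matrix.diagonal v
      = Matrix.diagonal (fun i => 1 - x * v i) := by
  rw [← Matrix.diagonal_one, ← Matrix.diagonal_smul, ← Matrix.diagonal_sub]
  rfl

lemma det_one_sub_smul_eq_prod {G : Matrix (Fin n) (Fin n) ℝ} (hG : G.IsHermitian) (x : ℝ) :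
    Matrix.det (1 - x • G) = ∏ i, (1 - x * hG.eigenvalues i) := by
  have h1 : star (hG.eigenvectorUnitary : Matrix (Fin n) (Fin n) ℝ)
      * (hG.eigenvectorUnitary : Matrix (Fin n) (Fin n) ℝ) = 1 :=
    Unitary.coe_star_mul_self hG.eigenvectorUnitary
  have := det_conj_eig hG 1 x
  rw [this, Matrix.mul_one, h1, one_sub_smul_diagonal, Matrix.det_diagonal]

lemma one_le_det_one_add {M : Matrix (Fin n) (Fin n) ℝ} (hM : M.PosSemidef) :
    1 ≤ Matrix.det (1 + M) := by
  have h := det_one_sub_smul_eq_prod hM.1 (-1)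
  have e : (1 : Matrix (Fin n) (Fin n) ℝ) - (-1 : ℝ) • M = 1 + M := by
    simp [sub_eq_add_neg]
  rw [e] at h
  rw [h]
  calc (1:ℝ) = ∏ _i : Fin n, (1:ℝ) := by simp
  _ ≤ ∏ i, (1 - (-1) * hM.1.eigenvalues i) := by
    refine Finset.prod_le_prod (fun i _ => by norm_num) (fun i _ => ?_)
    have := hM.eigenvalues_nonneg i
    nlinarith

lemma eval_det_pencil (A F : Matrix (Fin n) (Fin n) ℝ) (x : ℝ) :
    Polynomial.eval x (Matrix.det ((A.map C) - (X : ℝ[X]) • F.map C))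
      = Matrix.det (A - x • F) := by
  have h := RingHom.map_det (Polynomial.evalRingHom x) ((A.map C) - (X : ℝ[X]) • F.map C)
  simp only [coe_evalRingHom] at h
  rw [h]
  congr 1
  ext i j
  simp only [RingHom.mapMatrix_apply, Matrix.map_apply, Matrix.sub_apply, Matrix.smul_apply,
    smul_eq_mul, coe_evalRingHom, eval_sub, eval_mul, eval_C, eval_X, Matrix.map_sub,
    Matrix.map_map]



open scoped MatrixOrder in
lemma q_real_factor {D F : Matrix (Fin n) (Fin n) ℝ} (hD : D.PosSemidef) (hF : F.IsHermitian) :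
    ∃ (G : Matrix (Fin n) (Fin n) ℝ) (hG : G.IsHermitian),
      ∀ x : ℝ, Matrix.det ((1 + D) - x • F)
        = Matrix.det (1 + D) * ∏ j, (1 - x * hG.eigenvalues j) := by
  have hD1 : (1 + D : Matrix (Fin n) (Fin n) ℝ).PosSemidef :=
    Matrix.PosSemidef.add (Matrix.PosSemidef.one) hD
  set R := CFC.sqrt (1 + D) with hR
  have hRR : R * R = 1 + D := CFC.sqrt_mul_sqrt_self _ hD1.nonneg
  have hRH : R.IsHermitian := (CFC.sqrt_nonneg (1 + D)).posSemidef.1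
  have hdet1 : 1 ≤ Matrix.det (1 + D) := one_le_det_one_add hD
  have hdetR : R.det * R.det = (1 + D).det := by rw [← Matrix.det_mul, hRR]
  have hRdet : IsUnit R.det := by
    refine isUnit_iff_ne_zero.2 fun h => ?_
    rw [h, mul_zero] at hdetR
    linarith [hdetR]
  have hRinv : R * R⁻¹ = 1 := Matrix.mul_nonsing_inv R hRdet
  have hinvR : R⁻¹ * R = 1 := Matrix.nonsing_inv_mul R hRdet
  set G := R⁻¹ * F * R⁻¹ with hGdef
  have hGH : G.IsHermitian := by
    have hRiH : (R⁻¹).IsHermitian := by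
      rw [Matrix.IsHermitian, Matrix.conjTranspose_nonsing_inv, hRH.eq]
    rw [Matrix.IsHermitian, hGdef]
    rw [Matrix.conjTranspose_mul, Matrix.conjTranspose_mul, hRiH.eq, hF.eq]
    rw [Matrix.mul_assoc]
  refine ⟨G, hGH, fun x => ?_⟩
  have key : (1 + D) - x • F = R * (1 - x • G) * R := by
    rw [Matrix.mul_sub, Matrix.sub_mul, Matrix.mul_one, hRR, Matrix.mul_smul, Matrix.smul_mul]
    congr 2
    rw [hGdef, ← Matrix.mul_assoc, ← Matrix.mul_assoc, hRinv, Matrix.one_mul, Matrix.mul_assoc,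
      hinvR, Matrix.mul_one]
  rw [key, Matrix.det_mul, Matrix.det_mul, det_one_sub_smul_eq_prod hGH x]
  linear_combination (∏ j, (1 - x * hGH.eigenvalues j)) * hdetR

/-- for a nonnegative operator `D` and a symmetric operator `F` on a
finite-dimensional space (realized as real symmetric matrices), if `μ_k` and `λ_k`
(`k = 1,…,r`, `r = rank F`) enumerate with multiplicity the eigenvalues of the pencils
`1 - λF` and `1 + D - λF` (i.e. the roots of the corresponding determinant polynomials),
then `∏ (λ_k/μ_k) ≤ det (1 + D)`. -/
theorem pencil_eigenvalue_product_le_det {n : ℕ}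
    (D F : Matrix (Fin n) (Fin n) ℝ) (hD : D.PosSemidef) (hF : F.IsHermitian)
    (r : ℕ) (hr : r = F.rank)
    (μ lam : Fin r → ℝ)
    (hμ : (Matrix.det ((1 : Matrix (Fin n) (Fin n) ℝ[X]) - (X : ℝ[X]) • F.map C)).roots
        = Multiset.map μ (Finset.univ : Finset (Fin r)).val)
    (hlam : (Matrix.det ((1 : Matrix (Fin n) (Fin n) ℝ[X]) + D.map C - (X : ℝ[X]) • F.map C)).roots
        = Multiset.map lam (Finset.univ : Finset (Fin r)).val) :
    ∏ k, (lam k / μ k) ≤ Matrix.det (1 + D) := by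
  classical
  set ν := hF.eigenvalues with hν
  set p : ℝ[X] :=
    Matrix.det ((1 : Matrix (Fin n) (Fin n) ℝ[X]) - (X : ℝ[X]) • F.map C) with hpdef
  set q : ℝ[X] :=
    Matrix.det ((1 : Matrix (Fin n) (Fin n) ℝ[X]) + D.map C - (X : ℝ[X]) • F.map C) with hqdef
  obtain ⟨G, hG, hqreal⟩ := q_real_factor hD hF
  set d := Matrix.det (1 + D) with hd
  have hd1 : 1 ≤ d := one_le_det_one_add hD
  have hd0 : (0:ℝ) < d := lt_of_lt_of_le one_pos hd1
  have hmap1 : ((1 : Matrix (Fin n) (Fin n) ℝ)).map C = 1 := by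
    ext i j; simp [Matrix.map_apply, Matrix.one_apply, apply_ite C]
  have hmapD : ((1 + D : Matrix (Fin n) (Fin n) ℝ)).map C = 1 + D.map C := by
    ext i j; simp [Matrix.map_apply, Matrix.one_apply, Matrix.add_apply, apply_ite C]
  have hpeval : ∀ x : ℝ, p.eval x = ∏ i, (1 - x * ν i) := by
    intro x
    rw [hpdef, ← hmap1, eval_det_pencil, det_one_sub_smul_eq_prod hF x]
  have hqeval : ∀ x : ℝ, q.eval x = d * ∏ j, (1 - x * hG.eigenvalues j) := by
    intro x
    rw [hqdef, ← hmapD, eval_det_pencil, hqreal x]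
  have hp : p = ∏ i, (1 - C (ν i) * X) := by
    apply Polynomial.funext
    intro x
    rw [hpeval x, eval_prod]
    exact Finset.prod_congr rfl fun i _ => by rw [eval_sub, eval_one, eval_mul, eval_C, eval_X, mul_comm]
  have hq : q = C d * ∏ j, (1 - C (hG.eigenvalues j) * X) := by
    apply Polynomial.funext
    intro x
    rw [hqeval x, eval_mul, eval_C, eval_prod]
    congr 1
    exact Finset.prod_congr rfl fun j _ => by rw [eval_sub, eval_one, eval_mul, eval_C, eval_X, mul_comm]
  have hp0 : p ≠ 0 := by
    intro h
    have := hpeval 0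
    rw [h] at this
    simp at this
  have hq0 : q ≠ 0 := by
    intro h
    have := hqeval 0
    rw [h] at this
    simp at this
    exact hd0.ne this
  have hlin : ∀ c : ℝ, ((1 : ℝ[X]) - C c * X).degree ≤ 1 := by
    intro c
    refine (degree_sub_le _ _).trans (max_le ?_ ?_)
    · simpa using (degree_one_le : (1:ℝ[X]).degree ≤ 1)
    · exact (degree_mul_le _ _).trans (by simpa using add_le_add (degree_C_le) (le_refl (X:ℝ[X]).degree))
  have hsp : p.Splits := by
    rw [hp]
    exact Splits.prod fun i _ => Splits.of_degree_le_one (hlin _)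
  have hsq : q.Splits := by
    rw [hq]
    exact (Splits.C _).mul (Splits.prod fun j _ => Splits.of_degree_le_one (hlin _))
  have hdegp : p.natDegree = r := by
    rw [← splits_iff_card_roots.1 hsp, hμ]
    simp
  have hdegq : q.natDegree = r := by
    rw [← splits_iff_card_roots.1 hsq, hlam]
    simp
  have hdeg : q.degree = p.degree := by
    rw [degree_eq_natDegree hq0, degree_eq_natDegree hp0, hdegp, hdegq]
  set a := p.leadingCoeff with ha
  set b := q.leadingCoeff with hb
  have ha0 : a ≠ 0 := leadingCoeff_ne_zero.2 hp0
  have hb0 : b ≠ 0 := leadingCoeff_ne_zero.2 hq0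
  -- products of roots via evaluation at 0
  have hA : 1 = a * ∏ k, -(μ k) := by
    have h := congrArg (eval 0) hsp.eq_prod_roots
    rw [hpeval 0] at h
    simp only [eval_mul, eval_C, eval_multiset_prod, Multiset.map_map] at h
    rw [hμ, Multiset.map_map] at h
    simpa [Finset.prod, Function.comp] using h
  have hB : d = b * ∏ k, -(lam k) := by
    have h := congrArg (eval 0) hsq.eq_prod_roots
    rw [hqeval 0] at h
    simp only [eval_mul, eval_C, eval_multiset_prod, Multiset.map_map] at h
    rw [hlam, Multiset.map_map] at h
    simpa [Finset.prod, Function.comp] using h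
  -- eigenbasis of F quantities
  set D' := star (hF.eigenvectorUnitary : Matrix (Fin n) (Fin n) ℝ) * D
      * (hF.eigenvectorUnitary : Matrix (Fin n) (Fin n) ℝ) with hD'def
  have hD'psd : D'.PosSemidef := by
    have := hD.conjTranspose_mul_mul_same (hF.eigenvectorUnitary : Matrix (Fin n) (Fin n) ℝ)
    rwa [← Matrix.star_eq_conjTranspose, ← hD'def] at this
  set E := Matrix.diagonal (fun i => if ν i = 0 then (1:ℝ) else 0) with hEdef
  set c := Matrix.det (1 + E * D') with hc
  have hc1 : 1 ≤ c := by
    have hEH : Eᴴ = E := by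
      rw [hEdef, Matrix.diagonal_conjTranspose]
      congr
    have hEE : E * (E * D') = E * D' := by
      rw [← Matrix.mul_assoc, hEdef, Matrix.diagonal_mul_diagonal]
      have hfun : (fun i => (if ν i = 0 then (1:ℝ) else 0) * (if ν i = 0 then (1:ℝ) else 0))
          = fun i => if ν i = 0 then (1:ℝ) else 0 := by
        funext i
        by_cases h : ν i = 0 <;> simp [h]
      rw [hfun]
    have hpsd : (E * D' * E).PosSemidef := by
      have := hD'psd.mul_mul_conjTranspose_same E
      rwa [hEH] at this
    calc (1:ℝ) ≤ Matrix.det (1 + E * D' * E) := one_le_det_one_add hpsd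
    _ = Matrix.det (1 + E * (E * D')) := by rw [Matrix.det_one_add_mul_comm]
    _ = c := by rw [hEE, hc]
  have hc0 : (0:ℝ) < c := lt_of_lt_of_le one_pos hc1
  set Wd : ℝ → Matrix (Fin n) (Fin n) ℝ :=
    fun x => Matrix.diagonal (fun i => (1 - x * ν i)⁻¹) * D' with hWd
  have hqp : ∀ x : ℝ, (∀ i, 1 - x * ν i ≠ 0) →
      q.eval x = p.eval x * Matrix.det (1 + Wd x) := by
    intro x hx
    have e1 : q.eval x = Matrix.det ((1 + D) - x • F) := by
      rw [hqdef, ← hmapD, eval_det_pencil]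
    rw [e1, det_conj_eig hF (1 + D) x]
    have e2 : star (hF.eigenvectorUnitary : Matrix (Fin n) (Fin n) ℝ) * (1 + D)
        * (hF.eigenvectorUnitary : Matrix (Fin n) (Fin n) ℝ) = 1 + D' := by
      rw [Matrix.mul_add, Matrix.mul_one, Matrix.add_mul,
        Unitary.coe_star_mul_self hF.eigenvectorUnitary, hD'def]
    rw [e2, ← hν]
    have e3 : (1 + D') - x • Matrix.diagonal ν
        = Matrix.diagonal (fun i => 1 - x * ν i) + D' := by
      rw [add_sub_right_comm, one_sub_smul_diagonal]
    rw [e3]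
    have e4 : Matrix.diagonal (fun i => 1 - x * ν i) + D'
        = Matrix.diagonal (fun i => 1 - x * ν i) * (1 + Wd x) := by
      rw [Matrix.mul_add, Matrix.mul_one, hWd]
      congr 1
      rw [← Matrix.mul_assoc, Matrix.diagonal_mul_diagonal]
      have h5 : (fun i => (1 - x * ν i) * (1 - x * ν i)⁻¹) = fun _ => (1:ℝ) := by
        funext i; exact mul_inv_cancel₀ (hx i)
      rw [h5, Matrix.diagonal_one, Matrix.one_mul]
    rw [e4, Matrix.det_mul, Matrix.det_diagonal, ← hpeval x]
  have hWt : Filter.Tendsto Wd Filter.atTop (nhds (E * D')) := by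
    refine tendsto_pi_nhds.2 ?_
    intro i
    rw [tendsto_pi_nhds]
    intro j
    have hent : ∀ x, Wd x i j = (1 - x * ν i)⁻¹ * D' i j := by
      intro x
      simp only [hWd, Matrix.diagonal_mul]
    have hlim : (E * D') i j = (if ν i = 0 then (1:ℝ) else 0) * D' i j := by
      simp only [hEdef, Matrix.diagonal_mul]
    simp only [hent, hlim]
    by_cases h : ν i = 0
    · simpa [h] using
        (tendsto_const_nhds : Filter.Tendsto (fun _ : ℝ => D' i j) Filter.atTop (nhds (D' i j)))
    · have hz : Filter.Tendsto (fun x : ℝ => (1 - x * ν i)⁻¹) Filter.atTop (nhds 0) := by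
        rcases lt_or_gt_of_ne h with hneg | hpos
        · have h1 : Filter.Tendsto (fun x : ℝ => 1 + x * (-ν i)) Filter.atTop Filter.atTop :=
            tendsto_atTop_add_const_left _ 1
              (Filter.Tendsto.atTop_mul_const (by linarith) tendsto_id)
          have h2 : Filter.Tendsto (fun x : ℝ => 1 - x * ν i) Filter.atTop Filter.atTop :=
            h1.congr fun x => by ring
          exact h2.inv_tendsto_atTop
        · have h1 : Filter.Tendsto (fun x : ℝ => x * ν i + (-1)) Filter.atTop Filter.atTop :=
            tendsto_atTop_add_const_right _ (-1)
              (Filter.Tendsto.atTop_mul_const hpos tendsto_id)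
          have h2 := h1.inv_tendsto_atTop
          have h3 : Filter.Tendsto (fun x : ℝ => -((x * ν i + (-1))⁻¹)) Filter.atTop (nhds 0) := by
            have := h2.neg
            rwa [neg_zero] at this
          refine h3.congr fun x => ?_
          rw [neg_inv]
          congr 1
          ring
      have := hz.mul_const (D' i j)
      simpa [h] using this
  have hcont : Continuous fun W : Matrix (Fin n) (Fin n) ℝ => Matrix.det (1 + W) :=
    (continuous_const.add continuous_id).matrix_det
  have T2 : Filter.Tendsto (fun x => Matrix.det (1 + Wd x)) Filter.atTop (nhds c) :=
    (hcont.tendsto (E * D')).comp hWt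
  have hev : (fun x => q.eval x / p.eval x) =ᶠ[Filter.atTop]
      fun x => Matrix.det (1 + Wd x) := by
    have h1 : ∀ᶠ x : ℝ in Filter.atTop, ∀ i, 1 - x * ν i ≠ 0 := by
      rw [Filter.eventually_all]
      intro i
      rcases eq_or_ne (ν i) 0 with h | h
      · exact Filter.Eventually.of_forall fun x => by simp [h]
      · filter_upwards [Filter.eventually_gt_atTop ((ν i)⁻¹ + |(ν i)⁻¹|)] with x hx hc0'
        rcases lt_or_gt_of_ne h with hneg | hpos
        · have hx0 : 0 < x := by
            have := neg_abs_le ((ν i)⁻¹)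
            linarith
          nlinarith
        · nlinarith [le_abs_self ((ν i)⁻¹), mul_inv_cancel₀ h, abs_nonneg ((ν i)⁻¹)]
    filter_upwards [h1] with x hx
    have hpx : p.eval x ≠ 0 := by
      rw [hpeval x]
      exact Finset.prod_ne_zero_iff.2 fun i _ => hx i
    rw [hqp x hx, mul_comm, mul_div_assoc, div_self hpx, mul_one]
  have T1 : Filter.Tendsto (fun x => q.eval x / p.eval x) Filter.atTop (nhds (b / a)) :=
    div_tendsto_leadingCoeff_div_of_degree_eq q p hdeg
  have hba : b / a = c := tendsto_nhds_unique T1 (T2.congr' hev.symm)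
  -- final arithmetic
  have hprod : (∏ k, (lam k / μ k)) = (∏ k, -(lam k)) / (∏ k, -(μ k)) := by
    rw [← Finset.prod_div_distrib]
    exact Finset.prod_congr rfl fun k _ => (neg_div_neg_eq _ _).symm
  rw [hprod]
  have hbac : b = c * a := by
    rw [← hba, div_mul_cancel₀ _ ha0]
  have hL : (∏ k, -(lam k)) = d / b := by
    rw [hB, mul_comm, mul_div_assoc, div_self hb0, mul_one]
  have hP : (∏ k, -(μ k)) = 1 / a := by
    rw [eq_div_iff ha0, mul_comm, ← hA]
  rw [hL, hP, hbac]
  have hfin : d / (c * a) / (1 / a) = d / c := by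
    field_simp
  rw [hfin]
  exact div_le_self hd0.le hc1
end
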